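/- arXiv:math/0701385 — 7 statements merged into one kernel-verified Lean document; each statement's English description precedes it below -/
import Mathlib

section
/- Let λ ∈ ℂ be nonzero and let A = [[1,0],[−1/(2λ),1]] ∈ SL(2,ℂ). Then A·S·A⁻¹ = S and A·(T_λ·S·T_λ⁻¹)·A⁻¹ = T_{−2λ²}. Consequently the map g ↦ A⁻¹·g·A is an injective group homomorphism from the subgroup G_{−2λ²} of SL(2,ℂ) generated by S and T_{−2λ²} into the subgroup G_λ generated by S and T_λ (its image is the subgroup generated by S and T_λ·S·T_λ⁻¹). -/
noncomputable section

abbrev SL2 := Matrix.SpecialLinearGroup (Fin 2) ℂ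

def S : SL2 := ⟨!![1, 0; 1, 1], by norm_num [Matrix.det_fin_two_of]⟩

def T (lam : ℂ) : SL2 := ⟨!![1, 2 * lam; 0, 1], by norm_num [Matrix.det_fin_two_of]⟩

def A (lam : ℂ) : SL2 := ⟨!![1, 0; -1 / (2 * lam), 1], by norm_num [Matrix.det_fin_two_of]⟩

lemma T_inv (lam : ℂ) : (T lam)⁻¹ = T (-lam) := by
  rw [eq_comm, eq_inv_iff_mul_eq_one]
  ext i j
  simp only [Matrix.SpecialLinearGroup.coe_mul]
  fin_cases i <;> fin_cases j <;>
    simp [T, Matrix.mul_apply, Fin.sum_univ_two] <;> ring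

lemma hAS (lam : ℂ) : A lam * S = S * A lam := by
  ext i j
  simp only [Matrix.SpecialLinearGroup.coe_mul]
  fin_cases i <;> fin_cases j <;>
    · simp [A, S, Matrix.mul_apply, Fin.sum_univ_two]
      try ring

lemma hAT (lam : ℂ) (hlam : lam ≠ 0) :
    A lam * (T lam * S * (T lam)⁻¹) = T (-2 * lam ^ 2) * A lam := by
  rw [T_inv]
  ext i j
  simp only [Matrix.SpecialLinearGroup.coe_mul]
  fin_cases i <;> fin_cases j <;>
    · simp [A, S, T, Matrix.mul_apply, Fin.sum_univ_two]
      try field_simp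
      try ring

theorem conjugation_subgroup (lam : ℂ) (hlam : lam ≠ 0) :
    A lam * S * (A lam)⁻¹ = S ∧
    A lam * (T lam * S * (T lam)⁻¹) * (A lam)⁻¹ = T (-2 * lam ^ 2) ∧
    ∃ φ : (Subgroup.closure ({S, T (-2 * lam ^ 2)} : Set SL2)) →* SL2,
      Function.Injective φ ∧
      (∀ g, φ g = (A lam)⁻¹ * (g : SL2) * A lam) ∧
      MonoidHom.range φ = Subgroup.closure ({S, T lam * S * (T lam)⁻¹} : Set SL2) ∧
      Subgroup.closure ({S, T lam * S * (T lam)⁻¹} : Set SL2)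
        ≤ Subgroup.closure ({S, T lam} : Set SL2) := by
  have h1 : A lam * S * (A lam)⁻¹ = S := by
    rw [mul_inv_eq_iff_eq_mul]; exact hAS lam
  have h2 : A lam * (T lam * S * (T lam)⁻¹) * (A lam)⁻¹ = T (-2 * lam ^ 2) := by
    rw [mul_inv_eq_iff_eq_mul]; exact hAT lam hlam
  have h1' : (A lam)⁻¹ * S * A lam = S := by
    conv_lhs => rw [← h1]
    group
  have h2' : (A lam)⁻¹ * T (-2 * lam ^ 2) * A lam = T lam * S * (T lam)⁻¹ := by
    conv_lhs => rw [← h2]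
    group
  refine ⟨h1, h2, ?_⟩
  set ψ : SL2 →* SL2 := (MulAut.conj ((A lam)⁻¹)).toMonoidHom with hψ
  have hψval : ∀ g : SL2, ψ g = (A lam)⁻¹ * g * A lam := by
    intro g; simp [hψ, MulAut.conj_apply]
  refine ⟨ψ.comp (Subgroup.closure ({S, T (-2 * lam ^ 2)} : Set SL2)).subtype,
    ?_, ?_, ?_, ?_⟩
  · exact (MulAut.conj ((A lam)⁻¹)).injective.comp Subtype.val_injective
  · intro g; exact hψval g
  · have hrange : MonoidHom.range
        (ψ.comp (Subgroup.closure ({S, T (-2 * lam ^ 2)} : Set SL2)).subtype)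
        = Subgroup.map ψ (Subgroup.closure ({S, T (-2 * lam ^ 2)} : Set SL2)) := by
      ext x
      simp [MonoidHom.mem_range, Subgroup.mem_map]
    rw [hrange, MonoidHom.map_closure]
    congr 1
    rw [Set.image_insert_eq, Set.image_singleton, hψval, hψval, h1', h2']
  · rw [Subgroup.closure_le]
    rintro x (rfl | rfl)
    · exact Subgroup.subset_closure (by simp)
    · have hT : T lam ∈ Subgroup.closure ({S, T lam} : Set SL2) :=
        Subgroup.subset_closure (by simp)
      have hS : S ∈ Subgroup.closure ({S, T lam} : Set SL2) :=
        Subgroup.subset_closure (by simp)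
      exact mul_mem (mul_mem hT hS) (inv_mem hT)

end
end

section
/- Let f : ℂ → ℂ be f(z) = −2z². If |λ| > 1/2, then there exists a natural number n such that w = f^[n](λ) satisfies |w| ≥ 2 and |Im w| ≥ 1 − (Re w)²/4 (i.e. the n-th iterate of λ lies in the closed classical T-Schottky region {x+iy : |y| ≥ 1 − x²/4}). -/
lemma abs_iter_neg_two_sq (lam : ℂ) (n : ℕ) :
    ‖(fun z : ℂ => -2 * z ^ 2)^[n] lam‖
      = (2 * ‖lam‖) ^ (2 ^ n) / 2 := by
  induction n with
  | zero => simp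
  | succ n ih =>
    rw [Function.iterate_succ_apply']
    rw [norm_mul, norm_pow, ih]
    have : ‖(-2 : ℂ)‖ = 2 := by
      rw [norm_neg]; simp
    rw [this]
    have he : (2 * ‖lam‖) ^ 2 ^ (n + 1)
        = ((2 * ‖lam‖) ^ 2 ^ n) ^ 2 := by
      rw [← pow_mul, ← pow_succ]
    rw [he]
    ring

lemma schottky_of_two_le (w : ℂ) (hw : ‖w‖ ≥ 2) :
    |w.im| ≥ 1 - w.re ^ 2 / 4 := by
  have hsum : w.re ^ 2 + w.im ^ 2 ≥ 4 := by
    have := Complex.sq_norm w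
    rw [Complex.normSq_apply] at this
    nlinarith
  have h1 : |w.im| ^ 2 = w.im ^ 2 := sq_abs _
  have h2 : |w.im| ≥ 0 := abs_nonneg _
  nlinarith [sq_nonneg (w.re ^ 2 - 4), sq_nonneg (|w.im| + 1 - w.re ^ 2 / 4)]

theorem iterate_reaches_schottky_region (lam : ℂ)
    (h : ‖lam‖ > 1 / 2) :
    ∃ n : ℕ, ∀ w : ℂ, w = (fun z : ℂ => -2 * z ^ 2)^[n] lam →
      ‖w‖ ≥ 2 ∧ |w.im| ≥ 1 - w.re ^ 2 / 4 := by
  set b := 2 * ‖lam‖ with hb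
  have hb1 : 1 < b := by simp [hb]; linarith
  obtain ⟨n, hn⟩ := pow_unbounded_of_one_lt (4 : ℝ) hb1
  refine ⟨n, fun w hw => ?_⟩
  have habs : ‖w‖ = b ^ (2 ^ n) / 2 := by
    rw [hw]; exact abs_iter_neg_two_sq lam n
  have h2n : n ≤ 2 ^ n := Nat.le_of_lt (Nat.lt_two_pow_self (n := n))
  have hpow : b ^ n ≤ b ^ (2 ^ n) := pow_le_pow_right₀ (le_of_lt hb1) h2n
  have hge : ‖w‖ ≥ 2 := by
    rw [habs]; linarith
  exact ⟨hge, schottky_of_two_le w hge⟩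
end

section
/- Let S = [[1,0],[1,1]] and T_λ = [[1,2λ],[0,1]] in SL(2,ℂ), let f(z) = −2z², and say that the pair (S,T_μ) satisfies a relation if there exists a nontrivial element w of the free group on two generators whose evaluation at (S,T_μ) equals I or −I in SL(2,ℂ). If λ ≠ 0, n ≥ 1, and the pair (S, T_{f^[n](λ)}) satisfies a relation (i.e. G_{f^[n](λ)} is non-free), then the pair (S, T_λ) satisfies a relation (i.e. G_λ is non-free). -/
noncomputable section

/-- The evaluation of a word in the free group on two generators at a pair `(a, b)`. -/
def evalWord (w : FreeGroup (Fin 2)) (a b : SL2) : SL2 :=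
  FreeGroup.lift (fun i : Fin 2 => if i = 0 then a else b) w

/-- The pair `(a, b)` satisfies a relation: some nontrivial word in the free group on
two generators evaluates at `(a, b)` to `I` or `-I` in `SL(2, ℂ)`. -/
def HasRelation (a b : SL2) : Prop :=
  ∃ w : FreeGroup (Fin 2), w ≠ 1 ∧
    (((evalWord w a b : SL2) : Matrix (Fin 2) (Fin 2) ℂ) = 1 ∨
     ((evalWord w a b : SL2) : Matrix (Fin 2) (Fin 2) ℂ) = -1)

/-! ### Auxiliary matrix computations -/

def M0 (lam : ℂ) : SL2 := ⟨!![1, 0; (2*lam)⁻¹, 1], by norm_num [Matrix.det_fin_two_of]⟩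

lemma M0_inv (lam : ℂ) : (M0 lam)⁻¹ = M0 (-lam) := by
  apply inv_eq_of_mul_eq_one_right
  apply Matrix.SpecialLinearGroup.ext
  intro i j
  simp only [Matrix.SpecialLinearGroup.coe_mul, Matrix.SpecialLinearGroup.coe_one]
  simp only [Matrix.SpecialLinearGroup.coe_mul, M0, Matrix.SpecialLinearGroup.coe_one]
  fin_cases i <;> fin_cases j <;>
    simp [Matrix.mul_apply, Fin.sum_univ_two, Matrix.one_apply] <;> ring

lemma conj_S (lam : ℂ) : M0 lam * S = S * M0 lam := by
  apply Matrix.SpecialLinearGroup.ext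
  intro i j
  simp only [Matrix.SpecialLinearGroup.coe_mul, Matrix.SpecialLinearGroup.coe_one]
  simp only [Matrix.SpecialLinearGroup.coe_mul, M0, S]
  fin_cases i <;> fin_cases j <;>
    simp [Matrix.mul_apply, Fin.sum_univ_two] <;> ring

lemma conj_T (lam : ℂ) (hlam : lam ≠ 0) :
    M0 lam * T (-2*lam^2) * (M0 lam)⁻¹ = T lam * S * (T lam)⁻¹ := by
  rw [M0_inv, T_inv]
  apply Matrix.SpecialLinearGroup.ext
  intro i j
  simp only [Matrix.SpecialLinearGroup.coe_mul, Matrix.SpecialLinearGroup.coe_one]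
  simp only [Matrix.SpecialLinearGroup.coe_mul, M0, S, T]
  fin_cases i <;> fin_cases j
  all_goals try simp [Matrix.mul_apply, Fin.sum_univ_two]
  all_goals try field_simp
  all_goals try ring

/-! ### The substitution endomorphism of the free group and its injectivity -/

open FreeGroup SemidirectProduct in
/-- The shift action of `Multiplicative ℤ` on `FreeGroup ℤ`. -/
def shiftHom : Multiplicative ℤ →* MulAut (FreeGroup ℤ) :=
  MonoidHom.mk' (fun n => FreeGroup.freeGroupCongr (Equiv.addRight n.toAdd)) (by
    intro a b
    apply MulEquiv.toMonoidHom_injective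
    apply FreeGroup.ext_hom
    intro k
    simp [MulAut.mul_apply]
    congr 1
    omega)

/-- The substitution endomorphism `x ↦ x`, `y ↦ y x y⁻¹`. -/
def phiMap : FreeGroup (Fin 2) →* FreeGroup (Fin 2) :=
  FreeGroup.lift (fun i : Fin 2 =>
    if i = 0 then FreeGroup.of 0 else FreeGroup.of 1 * FreeGroup.of 0 * (FreeGroup.of 1)⁻¹)

open FreeGroup SemidirectProduct in
def chi : FreeGroup (Fin 2) →* FreeGroup ℤ ⋊[shiftHom] Multiplicative ℤ :=
  FreeGroup.lift (fun i : Fin 2 =>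
    if i = 0 then inl (FreeGroup.of (0 : ℤ)) else inr (Multiplicative.ofAdd 1))

open FreeGroup SemidirectProduct in
lemma chi_comp_phiMap :
    chi.comp phiMap = (inl : FreeGroup ℤ →* FreeGroup ℤ ⋊[shiftHom] Multiplicative ℤ).comp
      (FreeGroup.map (fun i : Fin 2 => (i.val : ℤ))) := by
  apply FreeGroup.ext_hom
  intro a
  fin_cases a
  · simp [chi, phiMap, FreeGroup.map.of]
  · show chi (phiMap (FreeGroup.of 1)) = _
    rw [phiMap, FreeGroup.lift_apply_of, if_neg (show ¬((1:Fin 2)=0) by decide)]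
    rw [MonoidHom.map_mul chi, MonoidHom.map_mul chi, MonoidHom.map_inv chi]
    show chi (FreeGroup.of 1) * chi (FreeGroup.of 0) * (chi (FreeGroup.of 1))⁻¹ = _
    rw [chi, FreeGroup.lift_apply_of, FreeGroup.lift_apply_of,
      if_neg (show ¬((1:Fin 2)=0) by decide), if_pos rfl]
    rw [← _root_.map_inv (SemidirectProduct.inr (φ := shiftHom)), ← SemidirectProduct.inl_aut]
    simp [shiftHom, FreeGroup.map.of]
    rfl

lemma phiMap_injective : Function.Injective phiMap := by
  have hretr : Function.LeftInverse
      (FreeGroup.map (fun k : ℤ => if k = 0 then (0 : Fin 2) else 1))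
      (FreeGroup.map (fun i : Fin 2 => (i.val : ℤ))) := by
    intro x
    rw [FreeGroup.map.comp]
    have : ((fun k : ℤ => if k = 0 then (0 : Fin 2) else 1) ∘ fun i : Fin 2 => (i.val : ℤ)) = id := by
      funext i; fin_cases i <;> simp
    rw [this, FreeGroup.map.id]
  intro u v huv
  have e : ∀ w, chi (phiMap w)
      = SemidirectProduct.inl ((FreeGroup.map fun i : Fin 2 => (i.val : ℤ)) w) := by
    intro w
    have := DFunLike.congr_fun chi_comp_phiMap w
    simpa using this
  apply hretr.injective
  apply SemidirectProduct.inl_injective (φ := shiftHom)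
  rw [← e u, ← e v, huv]

/-! ### Evaluation of the substituted word -/

lemma eval_phiMap (lam : ℂ) (hlam : lam ≠ 0) (w : FreeGroup (Fin 2)) :
    evalWord (phiMap w) S (T lam)
      = M0 lam * evalWord w S (T (-2*lam^2)) * (M0 lam)⁻¹ := by
  have h1 : (FreeGroup.lift fun i : Fin 2 => if i = 0 then S else T lam).comp phiMap
      = FreeGroup.lift (fun i : Fin 2 => if i = 0 then S else T lam * S * (T lam)⁻¹) := by
    apply FreeGroup.ext_hom
    intro a
    fin_cases a
    · simp [phiMap]
    · show (FreeGroup.lift fun i : Fin 2 => if i = 0 then S else T lam) (phiMap (FreeGroup.of 1)) = _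
      rw [phiMap, FreeGroup.lift_apply_of, if_neg (show ¬((1:Fin 2)=0) by decide)]
      rw [map_mul, map_mul, map_inv]
      simp [if_neg (show ¬((1:Fin 2)=0) by decide)]
  have h2 : ((MulAut.conj (M0 lam)).toMonoidHom).comp
        (FreeGroup.lift fun i : Fin 2 => if i = 0 then S else T (-2*lam^2))
      = FreeGroup.lift (fun i : Fin 2 => if i = 0 then S else T lam * S * (T lam)⁻¹) := by
    apply FreeGroup.ext_hom
    intro a
    fin_cases a
    · show MulAut.conj (M0 lam)
          ((FreeGroup.lift fun i : Fin 2 => if i = 0 then S else T (-2*lam^2)) (FreeGroup.of 0))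
        = (FreeGroup.lift fun i : Fin 2 => if i = 0 then S else T lam * S * (T lam)⁻¹)
            (FreeGroup.of 0)
      rw [FreeGroup.lift_apply_of, FreeGroup.lift_apply_of, if_pos rfl, if_pos rfl, MulAut.conj_apply]
      rw [conj_S, mul_inv_cancel_right]
    · show MulAut.conj (M0 lam)
          ((FreeGroup.lift fun i : Fin 2 => if i = 0 then S else T (-2*lam^2)) (FreeGroup.of 1))
        = (FreeGroup.lift fun i : Fin 2 => if i = 0 then S else T lam * S * (T lam)⁻¹)
            (FreeGroup.of 1)
      rw [FreeGroup.lift_apply_of, FreeGroup.lift_apply_of,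
        if_neg (show ¬((1:Fin 2)=0) by decide), MulAut.conj_apply]
      exact conj_T lam hlam
  have e1 := DFunLike.congr_fun h1 w
  have e2 := DFunLike.congr_fun h2 w
  simp only [MonoidHom.comp_apply, MulEquiv.coe_toMonoidHom, MulAut.conj_apply] at e1 e2
  show (FreeGroup.lift fun i : Fin 2 => if i = 0 then S else T lam) (phiMap w) = _
  rw [e1, ← e2]
  rfl

/-! ### The one-step pullback -/

lemma step (lam : ℂ) (hlam : lam ≠ 0)
    (h : HasRelation S (T (-2*lam^2))) : HasRelation S (T lam) := by
  obtain ⟨w, hw, hval⟩ := h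
  refine ⟨phiMap w, fun hc => hw (phiMap_injective (by rw [hc, map_one])), ?_⟩
  have key := eval_phiMap lam hlam w
  rw [key]
  rcases hval with hval | hval
  · left
    rw [Matrix.SpecialLinearGroup.coe_mul, Matrix.SpecialLinearGroup.coe_mul, hval, mul_one,
      ← Matrix.SpecialLinearGroup.coe_mul, mul_inv_cancel, Matrix.SpecialLinearGroup.coe_one]
  · right
    rw [Matrix.SpecialLinearGroup.coe_mul, Matrix.SpecialLinearGroup.coe_mul, hval, mul_neg,
      mul_one, neg_mul, ← Matrix.SpecialLinearGroup.coe_mul, mul_inv_cancel,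
      Matrix.SpecialLinearGroup.coe_one]

lemma iterate_ne_zero (m : ℕ) (x : ℂ) (hx : x ≠ 0) :
    (fun z : ℂ => -2 * z ^ 2)^[m] x ≠ 0 := by
  induction m with
  | zero => simpa using hx
  | succ k ih =>
    rw [Function.iterate_succ_apply']
    exact mul_ne_zero (by norm_num) (pow_ne_zero _ ih)

theorem nonfree_pulls_back (lam : ℂ) (hlam : lam ≠ 0) (n : ℕ) (hn : 1 ≤ n)
    (h : HasRelation S (T ((fun z : ℂ => -2 * z ^ 2)^[n] lam))) :
    HasRelation S (T lam) := by
  clear hn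
  induction n with
  | zero => simpa using h
  | succ k ih =>
    rw [Function.iterate_succ_apply'] at h
    exact ih (step _ (iterate_ne_zero k lam hlam) h)

end
end

section
/- Let S = [[1,0],[1,1]] and T_λ = [[1,2λ],[0,1]] in SL(2,ℂ). For each λ in {(1+i)/2, (1−i)/2, (−1+i)/2, (−1−i)/2}, the group G_λ generated by S and T_λ is not free on its generators: there exists a nontrivial element w of the free group on two generators whose evaluation at (S, T_λ) equals I or −I in SL(2,ℂ). -/
noncomputable section

set_option maxHeartbeats 1000000

def ga : FreeGroup (Fin 2) := FreeGroup.of 0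
def gb : FreeGroup (Fin 2) := FreeGroup.of 1

/-- word giving a relation for `2 * lam = 1 ± i`. -/
def w1 : FreeGroup (Fin 2) :=
  (gb*ga*gb⁻¹*ga*gb*ga⁻¹*gb*ga) * (ga*gb*ga⁻¹*gb*ga*gb⁻¹*ga*gb)⁻¹

/-- word giving a relation for `2 * lam = -1 ± i`. -/
def w2 : FreeGroup (Fin 2) :=
  (gb⁻¹*ga*gb*ga*gb⁻¹*ga⁻¹*gb⁻¹*ga) * (ga*gb⁻¹*ga⁻¹*gb⁻¹*ga*gb*ga*gb⁻¹)⁻¹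

lemma w1_ne : w1 ≠ 1 := by decide
lemma w2_ne : w2 ≠ 1 := by decide

lemma Sinv : ((S⁻¹ : SL2) : Matrix (Fin 2) (Fin 2) ℂ) = !![1, 0; -1, 1] := by
  have : S⁻¹ = (⟨!![1, 0; -1, 1], by norm_num [Matrix.det_fin_two_of]⟩ : SL2) := by
    apply inv_eq_of_mul_eq_one_right
    ext i j
    fin_cases i <;> fin_cases j <;> erw [Matrix.SpecialLinearGroup.coe_mul] <;> simp [S, Matrix.mul_apply, Fin.sum_univ_two]
  rw [this]

lemma Tinv (lam : ℂ) : (((T lam)⁻¹ : SL2) : Matrix (Fin 2) (Fin 2) ℂ) = !![1, -(2*lam); 0, 1] := by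
  have : (T lam)⁻¹ = (⟨!![1, -(2*lam); 0, 1], by norm_num [Matrix.det_fin_two_of]⟩ : SL2) := by
    apply inv_eq_of_mul_eq_one_right
    ext i j
    fin_cases i <;> fin_cases j <;> erw [Matrix.SpecialLinearGroup.coe_mul] <;> simp [T, Matrix.mul_apply, Fin.sum_univ_two]
  rw [this]

lemma Scoe : ((S : SL2) : Matrix (Fin 2) (Fin 2) ℂ) = !![1, 0; 1, 1] := rfl
lemma Tcoe (lam : ℂ) : ((T lam : SL2) : Matrix (Fin 2) (Fin 2) ℂ) = !![1, 2*lam; 0, 1] := rfl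

lemma eval_w1 (lam : ℂ) :
    evalWord w1 S (T lam)
      = (T lam * S * (T lam)⁻¹ * S * T lam * S⁻¹ * T lam * S) *
        (S * T lam * S⁻¹ * T lam * S * (T lam)⁻¹ * S * T lam)⁻¹ := by
  simp [evalWord, w1, ga, gb]

lemma eval_w2 (lam : ℂ) :
    evalWord w2 S (T lam)
      = ((T lam)⁻¹ * S * T lam * S * (T lam)⁻¹ * S⁻¹ * (T lam)⁻¹ * S) *
        (S * (T lam)⁻¹ * S⁻¹ * (T lam)⁻¹ * S * T lam * S * (T lam)⁻¹)⁻¹ := by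
  simp [evalWord, w2, ga, gb]

theorem whitehead_points_nonfree :
    ∀ lam ∈ ({(1 + Complex.I) / 2, (1 - Complex.I) / 2,
              (-1 + Complex.I) / 2, (-1 - Complex.I) / 2} : Set ℂ),
      HasRelation S (T lam) := by
  intro lam hlam
  have key1 : ∀ μ : ℂ, 2 * μ = 1 + Complex.I ∨ 2 * μ = 1 - Complex.I → HasRelation S (T μ) := by
    intro μ hμ
    refine ⟨w1, w1_ne, Or.inl ?_⟩
    rw [eval_w1, mul_inv_eq_one.mpr, Matrix.SpecialLinearGroup.coe_one]
    apply Subtype.ext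
    simp only [Matrix.SpecialLinearGroup.coe_mul, Sinv, Tinv, Scoe, Tcoe]
    rcases hμ with h | h <;> rw [h] <;>
      ext i j <;> fin_cases i <;> fin_cases j <;>
      simp [Matrix.mul_apply, Fin.sum_univ_two,
            show Complex.I ^ 3 = -Complex.I by rw [pow_succ, Complex.I_sq]; ring] <;>
      ring_nf <;>
      simp [show Complex.I ^ 3 = -Complex.I by rw [pow_succ, Complex.I_sq]; ring,
            Complex.I_sq] <;> ring
  have key2 : ∀ μ : ℂ, 2 * μ = -1 + Complex.I ∨ 2 * μ = -1 - Complex.I → HasRelation S (T μ) := by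
    intro μ hμ
    refine ⟨w2, w2_ne, Or.inl ?_⟩
    rw [eval_w2, mul_inv_eq_one.mpr, Matrix.SpecialLinearGroup.coe_one]
    apply Subtype.ext
    simp only [Matrix.SpecialLinearGroup.coe_mul, Sinv, Tinv, Scoe, Tcoe]
    rcases hμ with h | h <;> rw [h] <;>
      ext i j <;> fin_cases i <;> fin_cases j <;>
      simp [Matrix.mul_apply, Fin.sum_univ_two,
            show Complex.I ^ 3 = -Complex.I by rw [pow_succ, Complex.I_sq]; ring] <;>
      ring_nf <;>
      simp [show Complex.I ^ 3 = -Complex.I by rw [pow_succ, Complex.I_sq]; ring,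
            Complex.I_sq] <;> ring
  rcases hlam with h | h | h | h <;> subst h
  · exact key1 _ (Or.inl (by ring))
  · exact key1 _ (Or.inr (by ring))
  · exact key2 _ (Or.inl (by ring))
  · exact key2 _ (Or.inr (by ring))

end
end

section
/- Let λ = (1−i)/2, let S = [[1,0],[1,1]] and T = T_λ = [[1,1−i],[0,1]] in SL(2,ℂ), let T̃ = T·S·T⁻¹, and set M = S⁻¹·T̃·S·T̃⁻¹. Then the map ℤ × ℤ → SL(2,ℂ) given by (m,n) ↦ T^m · M^n is an injective group homomorphism whose image is contained in the subgroup G_λ generated by S and T; in particular G_λ contains a subgroup isomorphic to ℤ × ℤ. -/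
noncomputable section

theorem zxz_subgroup :
    let lam : ℂ := (1 - Complex.I) / 2
    let T' : SL2 := T lam
    let Tt : SL2 := T' * S * T'⁻¹
    let M : SL2 := S⁻¹ * Tt * S * Tt⁻¹
    ∃ φ : Multiplicative (ℤ × ℤ) →* SL2,
      (∀ m n : ℤ, φ (Multiplicative.ofAdd (m, n)) = T' ^ m * M ^ n) ∧
      Function.Injective φ ∧
      ∀ p : Multiplicative (ℤ × ℤ), φ p ∈ Subgroup.closure ({S, T'} : Set SL2) := by
  intro lam T' Tt M
  set I := Complex.I
  have hT : (T' : Matrix (Fin 2) (Fin 2) ℂ) = !![1, 1 - I; 0, 1] := by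
    show (!![1, 2 * lam; 0, 1] : Matrix (Fin 2) (Fin 2) ℂ) = _
    norm_num [lam]; ring
  have hTi : ((T'⁻¹ : SL2) : Matrix (Fin 2) (Fin 2) ℂ) = !![1, -(1 - I); 0, 1] := by
    rw [Matrix.SpecialLinearGroup.coe_inv, hT, Matrix.adjugate_fin_two]
    norm_num
  have hS : (S : Matrix (Fin 2) (Fin 2) ℂ) = !![1, 0; 1, 1] := rfl
  have hSi : ((S⁻¹ : SL2) : Matrix (Fin 2) (Fin 2) ℂ) = !![1, 0; -1, 1] := by
    rw [Matrix.SpecialLinearGroup.coe_inv, hS, Matrix.adjugate_fin_two]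
    norm_num
  have hTt : (Tt : Matrix (Fin 2) (Fin 2) ℂ) = !![2 - I, 2*I; 1, I] := by
    show ((T' * S * T'⁻¹ : SL2) : Matrix (Fin 2) (Fin 2) ℂ) = _
    simp only [Matrix.SpecialLinearGroup.coe_mul, hT, hS, hTi]
    norm_num [Matrix.mul_fin_two]
    have hI : I ^ 2 = -1 := Complex.I_sq
    exact ⟨by ring, by linear_combination (-1 : ℂ) * hI⟩
  have hTti : ((Tt⁻¹ : SL2) : Matrix (Fin 2) (Fin 2) ℂ) = !![I, -(2*I); -1, 2 - I] := by
    rw [Matrix.SpecialLinearGroup.coe_inv, hTt, Matrix.adjugate_fin_two]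
    norm_num
  have hM : (M : Matrix (Fin 2) (Fin 2) ℂ) = !![-1, 4; 0, -1] := by
    show ((S⁻¹ * Tt * S * Tt⁻¹ : SL2) : Matrix (Fin 2) (Fin 2) ℂ) = _
    simp only [Matrix.SpecialLinearGroup.coe_mul, hS, hSi, hTt, hTti]
    norm_num [Matrix.mul_fin_two]
    have hI : I ^ 2 = -1 := Complex.I_sq
    exact ⟨⟨by linear_combination hI, by linear_combination (-4 : ℂ) * hI⟩,
      by ring, by linear_combination hI⟩
  have hcomm : Commute T' M := by
    apply Subtype.ext
    simp only [Matrix.SpecialLinearGroup.coe_mul, hT, hM]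
    norm_num [Matrix.mul_fin_two]
    ring
  have Tpow : ∀ m : ℤ, ((T' ^ m : SL2) : Matrix (Fin 2) (Fin 2) ℂ)
      = !![1, (m : ℂ) * (1 - I); 0, 1] := by
    intro m
    induction m using Int.induction_on with
    | zero => simp [Matrix.one_fin_two]
    | succ k ih =>
        rw [zpow_add_one, Matrix.SpecialLinearGroup.coe_mul, ih, hT]
        norm_num [Matrix.mul_fin_two]
        push_cast; ring
    | pred k ih =>
        rw [zpow_sub_one, Matrix.SpecialLinearGroup.coe_mul, ih, hTi]
        norm_num [Matrix.mul_fin_two]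
        push_cast; ring
  have hMi : ((M⁻¹ : SL2) : Matrix (Fin 2) (Fin 2) ℂ) = !![-1, -4; 0, -1] := by
    rw [Matrix.SpecialLinearGroup.coe_inv, hM, Matrix.adjugate_fin_two]
    norm_num
  have Mpow : ∀ n : ℤ, ((M ^ n : SL2) : Matrix (Fin 2) (Fin 2) ℂ)
      = !![(-1 : ℂ) ^ n, (-1 : ℂ) ^ n * (-4 * n); 0, (-1 : ℂ) ^ n] := by
    intro n
    induction n using Int.induction_on with
    | zero => simp [Matrix.one_fin_two]
    | succ k ih =>
        rw [zpow_add_one, Matrix.SpecialLinearGroup.coe_mul, ih, hM,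
          zpow_add_one₀ (by norm_num : (-1 : ℂ) ≠ 0)]
        norm_num [Matrix.mul_fin_two]
        push_cast; ring
    | pred k ih =>
        rw [zpow_sub_one, Matrix.SpecialLinearGroup.coe_mul, ih, hMi,
          zpow_sub_one₀ (by norm_num : (-1 : ℂ) ≠ 0)]
        norm_num [Matrix.mul_fin_two]
        push_cast; ring
  refine ⟨{ toFun := fun p => T' ^ (p.toAdd.1) * M ^ (p.toAdd.2)
            map_one' := by simp
            map_mul' := by
              intro p q
              show T' ^ (p.toAdd.1 + q.toAdd.1) * M ^ (p.toAdd.2 + q.toAdd.2) = _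
              rw [zpow_add, zpow_add, mul_assoc (T' ^ p.toAdd.1),
                ← mul_assoc (T' ^ q.toAdd.1), (hcomm.zpow_zpow q.toAdd.1 p.toAdd.2).eq,
                mul_assoc, ← mul_assoc] }, ?_, ?_, ?_⟩
  · intro m n; rfl
  · rw [injective_iff_map_eq_one]
    intro p hp
    have hmat : ((T' ^ (p.toAdd.1) * M ^ (p.toAdd.2) : SL2) : Matrix (Fin 2) (Fin 2) ℂ)
        = (1 : Matrix (Fin 2) (Fin 2) ℂ) := by
      rw [show T' ^ (p.toAdd.1) * M ^ (p.toAdd.2) = (1 : SL2) from hp]; rfl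
    rw [Matrix.SpecialLinearGroup.coe_mul, Tpow, Mpow] at hmat
    set m : ℤ := p.toAdd.1
    set n : ℤ := p.toAdd.2
    have h00 : (-1 : ℂ) ^ n = 1 := by
      have := congrArg (fun A => A 0 0) hmat
      simpa [Matrix.mul_fin_two, Matrix.one_fin_two] using this
    have h01 : (-1 : ℂ) ^ n * (-4 * n) + (m : ℂ) * (1 - I) * (-1 : ℂ) ^ n = 0 := by
      have := congrArg (fun A => A 0 1) hmat
      simpa [Matrix.mul_fin_two, Matrix.one_fin_two] using this
    rw [h00] at h01
    have hm : m = 0 := by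
      have him := congrArg Complex.im h01
      simp [I] at him
      exact_mod_cast him
    have hn : n = 0 := by
      rw [hm] at h01
      have hre := congrArg Complex.re h01
      simp [I] at hre
      exact_mod_cast hre
    have h0 : p.toAdd = (0 : ℤ × ℤ) := Prod.ext_iff.mpr ⟨hm, hn⟩
    have := congrArg Multiplicative.ofAdd h0
    simpa using this
  · intro p
    have hScl : S ∈ Subgroup.closure ({S, T'} : Set SL2) :=
      Subgroup.subset_closure (by simp)
    have hTcl : T' ∈ Subgroup.closure ({S, T'} : Set SL2) :=
      Subgroup.subset_closure (by simp)
    have hTtcl : Tt ∈ Subgroup.closure ({S, T'} : Set SL2) :=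
      mul_mem (mul_mem hTcl hScl) (inv_mem hTcl)
    have hMcl : M ∈ Subgroup.closure ({S, T'} : Set SL2) :=
      mul_mem (mul_mem (mul_mem (inv_mem hScl) hTtcl) hScl) (inv_mem hTtcl)
    exact mul_mem (zpow_mem hTcl _) (zpow_mem hMcl _)

end
end

section
/- Let S = [[1,0],[1,1]] and T_λ = [[1,2λ],[0,1]] in SL(2,ℂ) and let f(z) = −2z². If λ ∈ ℂ and f^[n](λ) ∈ {i, −i} for some integer n ≥ 1, then the group G_λ generated by S and T_λ is not free on its generators (some nontrivial word in the free group on two generators evaluates at (S,T_λ) to ±I), and G_λ contains a subgroup isomorphic to ℤ × ℤ (there is an injective group homomorphism from ℤ × ℤ into G_λ). -/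
noncomputable section

namespace NF

/-- Lower unipotent matrices. -/
def LL (c : ℂ) : SL2 := ⟨!![1, 0; c, 1], by norm_num [Matrix.det_fin_two_of]⟩

/-- minus identity -/
def negI : SL2 := ⟨!![-1, 0; 0, -1], by norm_num [Matrix.det_fin_two_of]⟩

lemma LL_mul (c d : ℂ) : LL c * LL d = LL (c + d) := by
  apply Subtype.ext
  simp only [Matrix.SpecialLinearGroup.coe_mul]
  simp [LL, Matrix.mul_fin_two]

lemma LL_zero : LL 0 = 1 := by
  apply Subtype.ext
  simp [LL, Matrix.one_fin_two]

lemma LL_inv (c : ℂ) : (LL c)⁻¹ = LL (-c) := by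
  rw [inv_eq_iff_mul_eq_one, LL_mul, add_neg_cancel, LL_zero]

lemma LL_comm (c d : ℂ) : LL c * LL d = LL d * LL c := by
  rw [LL_mul, LL_mul, add_comm]

lemma S_eq : S = LL 1 := rfl

lemma T_mul (c d : ℂ) : T c * T d = T (c + d) := by
  apply Subtype.ext
  simp only [Matrix.SpecialLinearGroup.coe_mul]
  simp [T, Matrix.mul_fin_two]
  ring

lemma T_zero : T 0 = 1 := by
  apply Subtype.ext
  simp [T, Matrix.one_fin_two]

lemma T_inv (c : ℂ) : (T c)⁻¹ = T (-c) := by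
  rw [inv_eq_iff_mul_eq_one, T_mul, add_neg_cancel, T_zero]

lemma negI_mul_LL (c : ℂ) : negI * LL c = LL c * negI := by
  apply Subtype.ext
  simp only [Matrix.SpecialLinearGroup.coe_mul]
  simp [negI, LL, Matrix.mul_fin_two]

lemma negI_sq : negI * negI = 1 := by
  apply Subtype.ext
  simp only [Matrix.SpecialLinearGroup.coe_mul]
  simp [negI, Matrix.mul_fin_two, Matrix.one_fin_two]

lemma negI_inv : negI⁻¹ = negI := by
  rw [inv_eq_iff_mul_eq_one, negI_sq]

/-- the key conjugation identity: `T λ S (T λ)⁻¹ = h (T (-2λ²)) h⁻¹` with `h = LL (1/(2λ))`. -/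
lemma key_conj (lam : ℂ) (h0 : lam ≠ 0) :
    T lam * S * (T lam)⁻¹ = LL (1/(2*lam)) * T (-2*lam^2) * LL (-(1/(2*lam))) := by
  rw [T_inv]
  apply Subtype.ext
  show _ = _
  ext i j
  simp only [Matrix.SpecialLinearGroup.coe_mul]
  fin_cases i <;> fin_cases j <;>
    (try simp [T, S, LL, Matrix.SpecialLinearGroup.coe_mul, Matrix.mul_apply, Fin.sum_univ_two]) <;>
    (try field_simp) <;> (try ring)

/-- substitution endomorphism of the free group: a ↦ a, b ↦ b a b⁻¹ -/
def phi : FreeGroup (Fin 2) →* FreeGroup (Fin 2) :=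
  FreeGroup.lift (fun i : Fin 2 =>
    if i = 0 then FreeGroup.of 0 else FreeGroup.of 1 * FreeGroup.of 0 * (FreeGroup.of 1)⁻¹)

lemma evalWord_subst (w : FreeGroup (Fin 2)) (a b : SL2) :
    evalWord (phi w) a b = evalWord w a (b * a * b⁻¹) := by
  have : (FreeGroup.lift (fun i : Fin 2 => if i = 0 then a else b)).comp phi
      = FreeGroup.lift (fun i : Fin 2 => if i = 0 then a else b * a * b⁻¹) := by
    apply FreeGroup.ext_hom
    intro i
    fin_cases i <;> simp [phi]
  show (FreeGroup.lift _).comp phi w = _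
  rw [this]
  rfl

lemma evalWord_conj (w : FreeGroup (Fin 2)) (a b h : SL2) :
    evalWord w (h * a * h⁻¹) (h * b * h⁻¹) = h * evalWord w a b * h⁻¹ := by
  have : (FreeGroup.lift (fun i : Fin 2 => if i = 0 then h * a * h⁻¹ else h * b * h⁻¹))
      = ((MulAut.conj h).toMonoidHom).comp (FreeGroup.lift (fun i : Fin 2 => if i = 0 then a else b)) := by
    apply FreeGroup.ext_hom
    intro i
    fin_cases i <;> simp [MulAut.conj]
  show FreeGroup.lift _ w = _
  rw [this]
  rfl

def f (z : ℂ) : ℂ := -2 * z ^ 2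

lemma step (w : FreeGroup (Fin 2)) (lam : ℂ) (h0 : lam ≠ 0) :
    evalWord (phi w) S (T lam)
      = LL (1/(2*lam)) * evalWord w S (T (f lam)) * LL (-(1/(2*lam))) := by
  rw [evalWord_subst, key_conj lam h0]
  have hS : S = LL (1/(2*lam)) * S * (LL (1/(2*lam)))⁻¹ := by
    rw [LL_inv, S_eq, LL_mul, LL_mul]
    norm_num
  rw [← LL_inv]
  conv_lhs => rw [hS]
  rw [evalWord_conj, LL_inv]
  rfl

lemma chain : ∀ (k : ℕ) (w : FreeGroup (Fin 2)) (lam : ℂ),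
    (∀ j < k, f^[j] lam ≠ 0) →
    ∃ c : ℂ, evalWord ((⇑phi)^[k] w) S (T lam)
      = LL c * evalWord w S (T (f^[k] lam)) * LL (-c) := by
  intro k
  induction k with
  | zero =>
    intro w lam _
    refine ⟨0, ?_⟩
    simp [neg_zero, LL_zero]
  | succ k ih =>
    intro w lam hnz
    rw [Function.iterate_succ_apply]
    obtain ⟨c, hc⟩ := ih (phi w) lam (fun j hj => hnz j (Nat.lt_succ_of_lt hj))
    have hk : f^[k] lam ≠ 0 := hnz k (Nat.lt_succ_self k)
    rw [hc, step w _ hk]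
    refine ⟨c + 1/(2 * f^[k] lam), ?_⟩
    rw [show f (f^[k] lam) = f^[k+1] lam from (Function.iterate_succ_apply' f k lam).symm]
    have h1 : ∀ x : SL2, ∀ d : ℂ, LL c * (LL d * x * LL (-d)) * LL (-c)
        = (LL c * LL d) * x * (LL (-d) * LL (-c)) := by
      intro x d; group
    rw [h1, LL_mul, LL_mul, show -(1/(2 * f^[k] lam)) + -c = -(c + 1/(2 * f^[k] lam)) by ring]

/-- base word u₊ = b a⁻¹ b⁻¹ a b⁻¹ a⁻¹ b -/
def up : FreeGroup (Fin 2) :=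
  FreeGroup.of 1 * (FreeGroup.of 0)⁻¹ * (FreeGroup.of 1)⁻¹ * FreeGroup.of 0 *
    (FreeGroup.of 1)⁻¹ * (FreeGroup.of 0)⁻¹ * FreeGroup.of 1

/-- base word u₋ = b⁻¹ a⁻¹ b a b a⁻¹ b⁻¹ -/
def um : FreeGroup (Fin 2) :=
  (FreeGroup.of 1)⁻¹ * (FreeGroup.of 0)⁻¹ * FreeGroup.of 1 * FreeGroup.of 0 *
    FreeGroup.of 1 * (FreeGroup.of 0)⁻¹ * (FreeGroup.of 1)⁻¹

lemma S_inv : S⁻¹ = LL (-1) := by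
  rw [S_eq, LL_inv]

lemma eval_up (lam : ℂ) :
    evalWord up S (T lam) =
      ⟨!![1 - 4*lam^2 + 8*lam^3, 4*lam^2 * (4*lam^2 - 4*lam + 2);
          4*lam^2 - 1, 1 - 4*lam^2 + 8*lam^3], by
        norm_num [Matrix.det_fin_two_of]; ring⟩ := by
  have : evalWord up S (T lam)
      = T lam * S⁻¹ * (T lam)⁻¹ * S * (T lam)⁻¹ * S⁻¹ * T lam := by
    simp [evalWord, up, map_mul, map_inv]
  rw [this, S_inv, T_inv, S_eq]
  apply Subtype.ext
  show _ = _
  ext i j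
  simp only [Matrix.SpecialLinearGroup.coe_mul]
  fin_cases i <;> fin_cases j <;>
    simp [T, LL, Matrix.SpecialLinearGroup.coe_mul, Matrix.mul_apply, Fin.sum_univ_two] <;>
    ring

lemma eval_um (lam : ℂ) :
    evalWord um S (T lam) =
      ⟨!![1 - 4*lam^2 - 8*lam^3, 4*lam^2 * (4*lam^2 + 4*lam + 2);
          4*lam^2 - 1, 1 - 4*lam^2 - 8*lam^3], by
        norm_num [Matrix.det_fin_two_of]; ring⟩ := by
  have : evalWord um S (T lam)
      = (T lam)⁻¹ * S⁻¹ * T lam * S * T lam * S⁻¹ * (T lam)⁻¹ := by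
    simp [evalWord, um, map_mul, map_inv]
  rw [this, S_inv, T_inv, S_eq]
  apply Subtype.ext
  show _ = _
  ext i j
  simp only [Matrix.SpecialLinearGroup.coe_mul]
  fin_cases i <;> fin_cases j <;>
    simp [T, LL, Matrix.SpecialLinearGroup.coe_mul, Matrix.mul_apply, Fin.sum_univ_two] <;>
    ring


lemma I3 : Complex.I ^ 3 = -Complex.I := by
  rw [pow_succ, Complex.I_sq]; ring

lemma negI_LL_coe (c : ℂ) :
    ((negI * LL c : SL2) : Matrix (Fin 2) (Fin 2) ℂ) = !![-1, 0; -c, -1] := by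
  simp only [Matrix.SpecialLinearGroup.coe_mul]
  simp [negI, LL, Matrix.mul_fin_two]

lemma negI_LL_ne_one (c : ℂ) : negI * LL c ≠ 1 := by
  intro h
  have h2 : ((negI * LL c : SL2) : Matrix (Fin 2) (Fin 2) ℂ)
      = ((1 : SL2) : Matrix (Fin 2) (Fin 2) ℂ) := by rw [h]
  rw [negI_LL_coe] at h2
  have h3 := congr_fun (congr_fun h2 0) 0
  norm_num [Matrix.one_apply] at h3

lemma LL_inj {x y : ℂ} (h : LL x = LL y) : x = y := by
  simpa [LL] using congr_fun (congr_fun (congr_arg (fun z : SL2 => (z : Matrix (Fin 2) (Fin 2) ℂ)) h) 1) 0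

lemma conj_negLL (c c' : ℂ) : LL c * (negI * LL c') * LL (-c) = negI * LL c' := by
  rw [negI_mul_LL]
  have h1 : LL c * (LL c' * negI) * LL (-c) = (LL c * LL c') * (negI * LL (-c)) := by group
  rw [h1, negI_mul_LL, LL_mul, ← mul_assoc, LL_mul]
  have h2 : c + c' + -c = c' := by ring
  rw [h2, ← negI_mul_LL]

lemma commute_LL_S (c : ℂ) : Commute (LL c) S := by
  rw [S_eq]; exact LL_comm c 1

lemma LL_zpow (c : ℂ) (m : ℤ) : (LL c) ^ m = LL (m * c) := by
  have hn : ∀ k : ℕ, (LL c) ^ k = LL (k * c) := by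
    intro k
    induction k with
    | zero => simp [LL_zero]
    | succ k ih => rw [pow_succ, ih, LL_mul]; push_cast; ring_nf
  rcases m with k | k
  · simp only [Int.ofNat_eq_coe]
    rw [zpow_natCast, hn k]; push_cast; ring_nf
  · rw [zpow_negSucc, hn (k+1), LL_inv]
    congr 1
    push_cast [Int.negSucc_eq]
    ring

lemma negI_zpow_even (m : ℤ) : negI ^ (m + m) = 1 := by
  rw [← two_mul, zpow_mul]
  have h2 : negI ^ (2:ℤ) = 1 := by
    rw [show (2:ℤ) = 1 + 1 from rfl, zpow_add, zpow_one, negI_sq]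
  rw [h2, one_zpow]

lemma eval_mem (a b : SL2) (w : FreeGroup (Fin 2)) :
    evalWord w a b ∈ Subgroup.closure ({a, b} : Set SL2) := by
  show FreeGroup.lift _ w ∈ _
  induction w using FreeGroup.induction_on with
  | C1 => rw [map_one]; exact one_mem _
  | of i =>
    rw [FreeGroup.lift_apply_of]
    by_cases hi : i = 0
    · simp only [hi, if_pos rfl]
      exact Subgroup.subset_closure (Set.mem_insert _ _)
    · simp only [if_neg hi]
      exact Subgroup.subset_closure (Set.mem_insert_of_mem _ (Set.mem_singleton _))
  | inv_of i ih => rw [map_inv]; exact inv_mem ih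
  | mul x y ihx ihy => rw [map_mul]; exact mul_mem ihx ihy

lemma f_iter_zero (m : ℕ) : f^[m] (0:ℂ) = 0 := by
  induction m with
  | zero => rfl
  | succ m ih => rw [Function.iterate_succ_apply', ih]; simp [f]

lemma iter_one_real (k : ℕ) : ∃ t : ℝ, f^[k] (1:ℂ) = (t:ℂ) ∧ t ≠ 0 := by
  induction k with
  | zero => exact ⟨1, by simp, one_ne_zero⟩
  | succ k ih =>
    obtain ⟨t, ht, htne⟩ := ih
    refine ⟨-2 * t^2, ?_, by positivity⟩
    rw [Function.iterate_succ_apply', ht]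
    push_cast [f]
    ring

lemma up_noncomm (x : ℝ) (hx : x ≠ 0) : ¬ Commute (evalWord up S (T (x:ℂ))) S := by
  intro hcon
  have h00 := congr_fun (congr_fun (congr_arg
    (fun z : SL2 => (z : Matrix (Fin 2) (Fin 2) ℂ)) hcon.eq) 0) 0
  change ((evalWord up S (T (x:ℂ)) : Matrix (Fin 2) (Fin 2) ℂ) * (S : Matrix (Fin 2) (Fin 2) ℂ)) 0 0 = ((S : Matrix (Fin 2) (Fin 2) ℂ) * (evalWord up S (T (x:ℂ)) : Matrix (Fin 2) (Fin 2) ℂ)) 0 0 at h00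
  simp only [Matrix.SpecialLinearGroup.coe_mul, eval_up, Matrix.SpecialLinearGroup.coe_mk] at h00
  simp [S, Matrix.SpecialLinearGroup.coe_mk, Matrix.mul_apply, Fin.sum_univ_two] at h00
  rcases h00 with h | h
  · exact hx h
  · have h' : (4*x^2 - 4*x + 2 : ℝ) = 0 := by exact_mod_cast h
    nlinarith [sq_nonneg (2*x-1)]

lemma um_noncomm (x : ℝ) (hx : x ≠ 0) : ¬ Commute (evalWord um S (T (x:ℂ))) S := by
  intro hcon
  have h00 := congr_fun (congr_fun (congr_arg
    (fun z : SL2 => (z : Matrix (Fin 2) (Fin 2) ℂ)) hcon.eq) 0) 0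
  change ((evalWord um S (T (x:ℂ)) : Matrix (Fin 2) (Fin 2) ℂ) * (S : Matrix (Fin 2) (Fin 2) ℂ)) 0 0 = ((S : Matrix (Fin 2) (Fin 2) ℂ) * (evalWord um S (T (x:ℂ)) : Matrix (Fin 2) (Fin 2) ℂ)) 0 0 at h00
  simp only [Matrix.SpecialLinearGroup.coe_mul, eval_um, Matrix.SpecialLinearGroup.coe_mk] at h00
  simp [S, Matrix.SpecialLinearGroup.coe_mk, Matrix.mul_apply, Fin.sum_univ_two] at h00
  rcases h00 with h | h
  · exact hx h
  · have h' : (4*x^2 + 4*x + 2 : ℝ) = 0 := by exact_mod_cast h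
    nlinarith [sq_nonneg (2*x+1)]

lemma base_A (lam' : ℂ) (h2 : 2*lam' = 1 - Complex.I) :
    evalWord up S (T lam') = negI * LL (1 + 2*Complex.I) := by
  rw [eval_up]
  apply Subtype.ext
  rw [negI_LL_coe]
  show _ = _
  ext i j
  fin_cases i <;> fin_cases j
  · show 1 - 4*lam'^2 + 8*lam'^3 = -1
    linear_combination (-1*Complex.I + 1*Complex.I^2 + -2*lam'*Complex.I + 4*lam'^2) * h2 + (2 + -1*Complex.I) * Complex.I_sq
  · show 4*lam'^2 * (4*lam'^2 - 4*lam' + 2) = 0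
    linear_combination (1 + -1*Complex.I + 1*Complex.I^2 + -1*Complex.I^3 + 2*lam' + 2*lam'*Complex.I^2 + -4*lam'^2 + -4*lam'^2*Complex.I + 8*lam'^3) * h2 + (1 + -2*Complex.I + 1*Complex.I^2) * Complex.I_sq
  · show 4*lam'^2 - 1 = -(1 + 2*Complex.I)
    linear_combination (1 + -1*Complex.I + 2*lam') * h2 + (1) * Complex.I_sq
  · show 1 - 4*lam'^2 + 8*lam'^3 = -1
    linear_combination (-1*Complex.I + 1*Complex.I^2 + -2*lam'*Complex.I + 4*lam'^2) * h2 + (2 + -1*Complex.I) * Complex.I_sq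

lemma base_B (lam' : ℂ) (h2 : 2*lam' = -1 + Complex.I) :
    evalWord um S (T lam') = negI * LL (1 + 2*Complex.I) := by
  rw [eval_um]
  apply Subtype.ext
  rw [negI_LL_coe]
  show _ = _
  ext i j
  fin_cases i <;> fin_cases j
  · show 1 - 4*lam'^2 - 8*lam'^3 = -1
    linear_combination (1*Complex.I + -1*Complex.I^2 + -2*lam'*Complex.I + -4*lam'^2) * h2 + (2 + -1*Complex.I) * Complex.I_sq
  · show 4*lam'^2 * (4*lam'^2 + 4*lam' + 2) = 0
    linear_combination (-1 + 1*Complex.I + -1*Complex.I^2 + 1*Complex.I^3 + 2*lam' + 2*lam'*Complex.I^2 + 4*lam'^2 + 4*lam'^2*Complex.I + 8*lam'^3) * h2 + (1 + -2*Complex.I + 1*Complex.I^2) * Complex.I_sq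
  · show 4*lam'^2 - 1 = -(1 + 2*Complex.I)
    linear_combination (-1 + 1*Complex.I + 2*lam') * h2 + (1) * Complex.I_sq
  · show 1 - 4*lam'^2 - 8*lam'^3 = -1
    linear_combination (1*Complex.I + -1*Complex.I^2 + -2*lam'*Complex.I + -4*lam'^2) * h2 + (2 + -1*Complex.I) * Complex.I_sq

lemma base_C (lam' : ℂ) (h2 : 2*lam' = 1 + Complex.I) :
    evalWord up S (T lam') = negI * LL (1 - 2*Complex.I) := by
  rw [eval_up]
  apply Subtype.ext
  rw [negI_LL_coe]
  show _ = _
  ext i j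
  fin_cases i <;> fin_cases j
  · show 1 - 4*lam'^2 + 8*lam'^3 = -1
    linear_combination (1*Complex.I + 1*Complex.I^2 + 2*lam'*Complex.I + 4*lam'^2) * h2 + (2 + 1*Complex.I) * Complex.I_sq
  · show 4*lam'^2 * (4*lam'^2 - 4*lam' + 2) = 0
    linear_combination (1 + 1*Complex.I + 1*Complex.I^2 + 1*Complex.I^3 + 2*lam' + 2*lam'*Complex.I^2 + -4*lam'^2 + 4*lam'^2*Complex.I + 8*lam'^3) * h2 + (1 + 2*Complex.I + 1*Complex.I^2) * Complex.I_sq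
  · show 4*lam'^2 - 1 = -(1 - 2*Complex.I)
    linear_combination (1 + 1*Complex.I + 2*lam') * h2 + (1) * Complex.I_sq
  · show 1 - 4*lam'^2 + 8*lam'^3 = -1
    linear_combination (1*Complex.I + 1*Complex.I^2 + 2*lam'*Complex.I + 4*lam'^2) * h2 + (2 + 1*Complex.I) * Complex.I_sq

lemma base_D (lam' : ℂ) (h2 : 2*lam' = -1 - Complex.I) :
    evalWord um S (T lam') = negI * LL (1 - 2*Complex.I) := by
  rw [eval_um]
  apply Subtype.ext
  rw [negI_LL_coe]
  show _ = _
  ext i j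
  fin_cases i <;> fin_cases j
  · show 1 - 4*lam'^2 - 8*lam'^3 = -1
    linear_combination (-1*Complex.I + -1*Complex.I^2 + 2*lam'*Complex.I + -4*lam'^2) * h2 + (2 + 1*Complex.I) * Complex.I_sq
  · show 4*lam'^2 * (4*lam'^2 + 4*lam' + 2) = 0
    linear_combination (-1 + -1*Complex.I + -1*Complex.I^2 + -1*Complex.I^3 + 2*lam' + 2*lam'*Complex.I^2 + 4*lam'^2 + -4*lam'^2*Complex.I + 8*lam'^3) * h2 + (1 + 2*Complex.I + 1*Complex.I^2) * Complex.I_sq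
  · show 4*lam'^2 - 1 = -(1 - 2*Complex.I)
    linear_combination (-1 + -1*Complex.I + 2*lam') * h2 + (1) * Complex.I_sq
  · show 1 - 4*lam'^2 - 8*lam'^3 = -1
    linear_combination (-1*Complex.I + -1*Complex.I^2 + 2*lam'*Complex.I + -4*lam'^2) * h2 + (2 + 1*Complex.I) * Complex.I_sq


lemma LL_negI_LL (x y : ℂ) : LL x * (negI * LL y) = negI * LL (x + y) := by
  rw [negI_mul_LL, ← mul_assoc, LL_mul, ← negI_mul_LL]

lemma negI_zpow_even' (m : ℤ) : negI ^ (2 * m) = 1 := by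
  have h2 : negI ^ (2:ℤ) = 1 := by
    rw [show (2:ℤ) = 1 + 1 from rfl, zpow_add, zpow_one, negI_sq]
  rw [zpow_mul, h2, one_zpow]

lemma evalWord_eq (a b : SL2) (w : FreeGroup (Fin 2)) :
    evalWord w a b = FreeGroup.lift (fun i : Fin 2 => if i = 0 then a else b) w := rfl

end NF

open scoped commutatorElement

theorem preimages_of_i_nonfree_and_zxz (lam : ℂ) (n : ℕ) (hn : 1 ≤ n)
    (h : (fun z : ℂ => -2 * z ^ 2)^[n] lam = Complex.I ∨
         (fun z : ℂ => -2 * z ^ 2)^[n] lam = -Complex.I) :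
    HasRelation S (T lam) ∧
    ∃ φ : Multiplicative (ℤ × ℤ) →* SL2,
      Function.Injective φ ∧
      ∀ p : Multiplicative (ℤ × ℤ), φ p ∈ Subgroup.closure ({S, T lam} : Set SL2) := by
  have hfun : (fun z : ℂ => -2 * z ^ 2) = NF.f := rfl
  rw [hfun] at h
  obtain ⟨k, rfl⟩ : ∃ k, n = k + 1 := ⟨n - 1, by omega⟩
  have hIter : ∀ j ≤ k + 1, NF.f^[j] lam ≠ 0 := by
    intro j hj h0
    have hz : NF.f^[k+1] lam = 0 := by
      obtain ⟨m, hm⟩ : ∃ m, k + 1 = m + j := ⟨k + 1 - j, by omega⟩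
      rw [hm, Function.iterate_add_apply, h0, NF.f_iter_zero]
    rcases h with h | h
    · rw [hz] at h; exact Complex.I_ne_zero h.symm
    · rw [hz] at h; exact Complex.I_ne_zero (neg_eq_zero.mp h.symm)
  rw [Function.iterate_succ_apply'] at h
  obtain ⟨u, c', hu, him, hnc⟩ :
      ∃ (u : FreeGroup (Fin 2)) (c' : ℂ),
        evalWord u S (T (NF.f^[k] lam)) = NF.negI * NF.LL c' ∧ c'.im ≠ 0 ∧
        ∀ x : ℝ, x ≠ 0 → ¬ Commute (evalWord u S (T (x:ℂ))) S := by
    rcases h with hI | hI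
    · have hI' : -2 * (NF.f^[k] lam)^2 = Complex.I := hI
      have hfac : (2*(NF.f^[k] lam) - (1 - Complex.I)) * (2*(NF.f^[k] lam) + (1 - Complex.I)) = 0 := by
        linear_combination (-2:ℂ) * hI' - Complex.I_sq
      rcases mul_eq_zero.mp hfac with h2 | h2
      · exact ⟨NF.up, 1 + 2*Complex.I, NF.base_A _ (by linear_combination h2),
          by norm_num, NF.up_noncomm⟩
      · exact ⟨NF.um, 1 + 2*Complex.I, NF.base_B _ (by linear_combination h2),
          by norm_num, NF.um_noncomm⟩
    · have hI' : -2 * (NF.f^[k] lam)^2 = -Complex.I := hI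
      have hfac : (2*(NF.f^[k] lam) - (1 + Complex.I)) * (2*(NF.f^[k] lam) + (1 + Complex.I)) = 0 := by
        linear_combination (-2:ℂ) * hI' - Complex.I_sq
      rcases mul_eq_zero.mp hfac with h2 | h2
      · exact ⟨NF.up, 1 - 2*Complex.I, NF.base_C _ (by linear_combination h2),
          by norm_num, NF.up_noncomm⟩
      · exact ⟨NF.um, 1 - 2*Complex.I, NF.base_D _ (by linear_combination h2),
          by norm_num, NF.um_noncomm⟩
  obtain ⟨c, hc⟩ := NF.chain k u lam (fun j hj => hIter j (by omega))
  set U := (⇑NF.phi)^[k] u with hUdef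
  set K := evalWord U S (T lam) with hKdef
  have hK : K = NF.negI * NF.LL c' := by
    rw [hc, hu, NF.conj_negLL]
  have hSK : Commute S K := by
    rw [hK, NF.S_eq]
    have h1 : Commute (NF.LL 1) NF.negI := (NF.negI_mul_LL 1).symm
    have h2 : Commute (NF.LL 1) (NF.LL c') := NF.LL_comm 1 c'
    exact h1.mul_right h2
  have hlift0 : FreeGroup.lift (fun i : Fin 2 => if i = 0 then S else T lam) (FreeGroup.of 0) = S := by
    rw [FreeGroup.lift_apply_of]
    exact if_pos rfl
  constructor
  · refine ⟨⁅U, FreeGroup.of 0⁆, ?_, Or.inl ?_⟩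
    · intro hw
      have hcom : Commute U (FreeGroup.of 0) := commutatorElement_eq_one_iff_commute.mp hw
      obtain ⟨t, ht, htne⟩ := NF.iter_one_real k
      obtain ⟨c₀, hc₀⟩ := NF.chain k u 1 (fun j hj => by
        obtain ⟨s, hs, hsne⟩ := NF.iter_one_real j
        rw [hs]
        exact Complex.ofReal_ne_zero.mpr hsne)
      have hcom1 : Commute (evalWord U S (T (1:ℂ))) S := by
        have h5 := hcom.map (FreeGroup.lift (fun i : Fin 2 => if i = 0 then S else T (1:ℂ)))
        have h6 : (FreeGroup.lift (fun i : Fin 2 => if i = 0 then S else T (1:ℂ))) (FreeGroup.of 0) = S := by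
          rw [FreeGroup.lift_apply_of]
          exact if_pos rfl
        rw [h6] at h5
        exact h5
      have hM : evalWord u S (T (NF.f^[k] (1:ℂ)))
          = NF.LL (-c₀) * evalWord U S (T (1:ℂ)) * NF.LL c₀ := by
        rw [hc₀]
        rw [show NF.LL (-c₀) * (NF.LL c₀ * evalWord u S (T (NF.f^[k] (1:ℂ))) * NF.LL (-c₀)) * NF.LL c₀
            = (NF.LL (-c₀) * NF.LL c₀) * evalWord u S (T (NF.f^[k] (1:ℂ))) * (NF.LL (-c₀) * NF.LL c₀) from by
          group]
        rw [NF.LL_mul, neg_add_cancel, NF.LL_zero, one_mul, mul_one]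
      have hMc : Commute (evalWord u S (T (NF.f^[k] (1:ℂ)))) S := by
        rw [hM]
        exact ((NF.commute_LL_S (-c₀)).mul_left hcom1).mul_left (NF.commute_LL_S c₀)
      rw [ht] at hMc
      exact hnc t htne hMc
    · have heval : evalWord ⁅U, FreeGroup.of 0⁆ S (T lam) = ⁅K, S⁆ := by
        rw [NF.evalWord_eq, map_commutatorElement, hlift0]
        rfl
      rw [heval, commutatorElement_eq_one_iff_commute.mpr hSK.symm]
      simp
  · refine ⟨MonoidHom.mk' (fun p => S ^ (Multiplicative.toAdd p).1 * K ^ (Multiplicative.toAdd p).2) ?_, ?_, ?_⟩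
    · intro p q
      simp only [toAdd_mul, Prod.fst_add, Prod.snd_add, zpow_add]
      have hc2 : Commute (K ^ (Multiplicative.toAdd p).2) (S ^ (Multiplicative.toAdd q).1) :=
        hSK.symm.zpow_zpow _ _
      calc S ^ (Multiplicative.toAdd p).1 * S ^ (Multiplicative.toAdd q).1 *
            (K ^ (Multiplicative.toAdd p).2 * K ^ (Multiplicative.toAdd q).2)
          = S ^ (Multiplicative.toAdd p).1 * (S ^ (Multiplicative.toAdd q).1 *
            K ^ (Multiplicative.toAdd p).2) * K ^ (Multiplicative.toAdd q).2 := by group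
        _ = S ^ (Multiplicative.toAdd p).1 * (K ^ (Multiplicative.toAdd p).2 *
            S ^ (Multiplicative.toAdd q).1) * K ^ (Multiplicative.toAdd q).2 := by rw [← hc2.eq]
        _ = S ^ (Multiplicative.toAdd p).1 * K ^ (Multiplicative.toAdd p).2 *
            (S ^ (Multiplicative.toAdd q).1 * K ^ (Multiplicative.toAdd q).2) := by group
    · rw [injective_iff_map_eq_one]
      intro p hp
      simp only [MonoidHom.mk'_apply] at hp
      have hSa : S ^ (Multiplicative.toAdd p).1 = NF.LL (((Multiplicative.toAdd p).1 : ℤ) : ℂ) := by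
        rw [NF.S_eq, NF.LL_zpow, mul_one]
      have hKb : K ^ (Multiplicative.toAdd p).2
          = NF.negI ^ (Multiplicative.toAdd p).2 * NF.LL ((((Multiplicative.toAdd p).2 : ℤ) : ℂ) * c') := by
        rw [hK, (show Commute NF.negI (NF.LL c') from NF.negI_mul_LL c').mul_zpow, NF.LL_zpow]
      set a := (Multiplicative.toAdd p).1 with hadef
      set b := (Multiplicative.toAdd p).2 with hbdef
      rcases Int.even_or_odd b with ⟨m, hm⟩ | ⟨m, hm⟩
      · have hNb : NF.negI ^ b = 1 := by rw [hm, ← two_mul]; exact NF.negI_zpow_even' m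
        rw [hSa, hKb, hNb, one_mul, NF.LL_mul] at hp
        have h0 : ((a : ℤ) : ℂ) + ((b : ℤ) : ℂ) * c' = 0 := NF.LL_inj (hp.trans NF.LL_zero.symm)
        have hb : b = 0 := by
          have him2 := congr_arg Complex.im h0
          simp only [Complex.add_im, Complex.mul_im, Complex.intCast_im, Complex.intCast_re,
            Complex.zero_im, zero_mul, add_zero, zero_add, mul_zero] at him2
          rcases mul_eq_zero.mp him2 with h' | h'
          · exact_mod_cast h'
          · exact absurd h' him
        have ha : a = 0 := by
          rw [hb] at h0
          simp at h0
          exact_mod_cast h0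
        have h9 : Multiplicative.toAdd p = 0 := Prod.ext ha hb
        rw [← ofAdd_toAdd p, h9, ofAdd_zero]
      · have hNb : NF.negI ^ b = NF.negI := by
          rw [hm, zpow_add, NF.negI_zpow_even' m, one_mul, zpow_one]
        rw [hSa, hKb, hNb, NF.LL_negI_LL] at hp
        exact absurd hp (NF.negI_LL_ne_one _)
    · intro p
      simp only [MonoidHom.mk'_apply]
      exact mul_mem
        (zpow_mem (Subgroup.subset_closure (Set.mem_insert _ _)) _)
        (zpow_mem (NF.eval_mem S (T lam) U) _)

end
end

section
/- Let f : ℂ → ℂ be f(z) = −2z² and let P = {w ∈ ℂ : |Re w| ≤ 2 and |Im w| = 1 − (Re w)²/4} (the Schottky parabolas). Then f⁻¹(P) = {z ∈ ℂ : |Re z| + |Im z| = 1}, i.e. the preimage of the Schottky parabolas under f is exactly the boundary of the square (diamond) with vertices ±1 and ±i. -/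
theorem preimage_of_schottky_parabolas :
    (fun z : ℂ => -2 * z ^ 2) ⁻¹'
        {w : ℂ | |w.re| ≤ 2 ∧ |w.im| = 1 - w.re ^ 2 / 4}
      = {z : ℂ | |z.re| + |z.im| = 1} := by
  ext z
  simp only [Set.mem_preimage, Set.mem_setOf_eq]
  have hre : (-2 * z ^ 2 : ℂ).re = -2 * (z.re ^ 2 - z.im ^ 2) := by
    simp [Complex.mul_re, pow_two]
  have him : (-2 * z ^ 2 : ℂ).im = -(4 * (z.re * z.im)) := by
    simp [Complex.mul_im, pow_two]; ring
  rw [hre, him]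
  set x := z.re with hx
  set y := z.im with hy
  have h1 : |(-2 * (x ^ 2 - y ^ 2))| = 2 * |x ^ 2 - y ^ 2| := by
    rw [abs_mul]; norm_num
  have h2 : |(-(4 * (x * y)))| = 4 * (|x| * |y|) := by
    rw [abs_neg, abs_mul, abs_mul]; norm_num
  rw [h1, h2]
  have hu : 0 ≤ |x| := abs_nonneg x
  have hv : 0 ≤ |y| := abs_nonneg y
  have hx2 : |x| ^ 2 = x ^ 2 := sq_abs x
  have hy2 : |y| ^ 2 = y ^ 2 := sq_abs y
  constructor
  · rintro ⟨ha, hb⟩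
    have key : (|x| + |y|) ^ 2 = 1 := by
      nlinarith [sq_nonneg (|x| - |y|), sq_nonneg (|x| * |y|)]
    nlinarith [key, sq_nonneg (|x| + |y| - 1)]
  · intro h
    have habs : |x ^ 2 - y ^ 2| ≤ 1 := by
      rcases abs_cases (x ^ 2 - y ^ 2) with ⟨h', _⟩ | ⟨h', _⟩ <;>
        rw [h'] <;> nlinarith [sq_nonneg (|x| - |y|)]
    constructor
    · nlinarith
    · have hd : x ^ 2 - y ^ 2 = |x| - |y| := by
        rw [← hx2, ← hy2]; linear_combination (|x| - |y|) * h
      linear_combination (x ^ 2 - y ^ 2 + |x| - |y|) * hd + (|x| + |y| + 1) * h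
end
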